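/- Let Ω be an n×n complex matrix with ‖Ω‖ < π in the ℓ² operator (spectral) norm. Then for every n×n complex matrix C, the series ∑_{k≥0} ((B_k : ℝ)/k!) • ad_Ω^k C is absolutely summable, i.e. the family of norms k ↦ ‖((B_k)/k!) • ad_Ω^k C‖ is summable. -/

import Mathlib

open scoped Matrix.Norms.L2Operator

open Real in
/-- Bernoulli bound: `|B_k|/k! ≤ 4/(2π)^k`. -/
lemma bernoulli_div_factorial_le (k : ℕ) :
    |((bernoulli k : ℚ) : ℝ)| / (Nat.factorial k) ≤ 4 / (2 * π) ^ k := by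
  rcases Nat.even_or_odd k with ⟨m, hm⟩ | hodd
  · rcases Nat.eq_zero_or_pos m with rfl | hm0
    · norm_num [hm]
    · -- even case, k = 2m, m ≥ 1
      have hk : k = 2 * m := by omega
      subst hk
      have h := hasSum_zeta_nat (k := m) (by omega)
      have h2 := hasSum_zeta_two
      have hle : (-1 : ℝ) ^ (m + 1) * (2 : ℝ) ^ (2 * m - 1) * π ^ (2 * m) *
          ((bernoulli (2 * m) : ℚ) : ℝ) / ((2 * m).factorial : ℝ) ≤ π ^ 2 / 6 := by
        refine hasSum_le (fun i => ?_) h h2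
        rcases Nat.eq_zero_or_pos i with rfl | hi
        · rw [Nat.cast_zero, zero_pow (by omega : 2 * m ≠ 0), zero_pow (two_ne_zero),
            div_zero]
        · have h1 : (1 : ℝ) ≤ (i : ℝ) := by exact_mod_cast hi
          have hpow : (i : ℝ) ^ 2 ≤ (i : ℝ) ^ (2 * m) :=
            pow_le_pow_right₀ h1 (by omega)
          exact one_div_le_one_div_of_le (by positivity) hpow
      have hnn : (0 : ℝ) ≤ (-1 : ℝ) ^ (m + 1) * (2 : ℝ) ^ (2 * m - 1) * π ^ (2 * m) *
          ((bernoulli (2 * m) : ℚ) : ℝ) / ((2 * m).factorial : ℝ) :=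
        h.nonneg fun i => by positivity
      have hπ : (0 : ℝ) < π := Real.pi_pos
      have hA : (0 : ℝ) < (2 : ℝ) ^ (2 * m - 1) * π ^ (2 * m) := by positivity
      have hfac : (0 : ℝ) < (((2 * m).factorial : ℝ) : ℝ) := by positivity
      -- |B_{2m}| / (2m)! * (2^{2m-1} π^{2m}) = the sum value ≤ π²/6
      have habs : |((bernoulli (2 * m) : ℚ) : ℝ)| / ((2 * m).factorial : ℝ) *
          ((2 : ℝ) ^ (2 * m - 1) * π ^ (2 * m)) ≤ π ^ 2 / 6 := by
        have : |((bernoulli (2 * m) : ℚ) : ℝ)| / ((2 * m).factorial : ℝ) *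
            ((2 : ℝ) ^ (2 * m - 1) * π ^ (2 * m)) =
            |(-1 : ℝ) ^ (m + 1) * (2 : ℝ) ^ (2 * m - 1) * π ^ (2 * m) *
              ((bernoulli (2 * m) : ℚ) : ℝ) / ((2 * m).factorial : ℝ)| := by
          rw [abs_div, abs_mul, abs_mul, abs_mul, abs_pow, abs_neg, abs_one, one_pow, one_mul,
            abs_of_pos (by positivity : (0:ℝ) < (2:ℝ) ^ (2*m-1)),
            abs_of_pos (by positivity : (0:ℝ) < π ^ (2*m)),
            abs_of_pos hfac]
          ring
        rw [this, abs_of_nonneg hnn]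
        exact hle
      -- now conclude
      have h2pow : (2 : ℝ) ^ (2 * m - 1) * π ^ (2 * m) = (2 * π) ^ (2 * m) / 2 := by
        rw [mul_pow]
        have : (2 : ℝ) ^ (2 * m - 1) = 2 ^ (2 * m) / 2 := by
          rw [eq_div_iff (two_ne_zero' ℝ), ← pow_succ]
          congr 1
          omega
        rw [this]
        ring
      rw [h2pow] at habs
      calc |((bernoulli (2 * m) : ℚ) : ℝ)| / ((2 * m).factorial : ℝ)
          ≤ (π ^ 2 / 6) / ((2 * π) ^ (2 * m) / 2) := by
            rw [le_div_iff₀ (by positivity)]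
            exact habs
        _ = (π ^ 2 / 3) / (2 * π) ^ (2 * m) := by ring
        _ ≤ 4 / (2 * π) ^ (2 * m) := by
            gcongr
            nlinarith [Real.pi_lt_d2]
  · -- odd case
    rcases Nat.lt_or_ge k 2 with hk | hk
    · interval_cases k
      · norm_num
      · simp only [bernoulli_one]
        push_cast
        rw [abs_of_nonpos (by norm_num : (-(1:ℝ)/2) ≤ 0)]
        rw [div_le_div_iff₀ (by norm_num) (by positivity)]
        have := Real.pi_lt_d2
        norm_num
        nlinarith
    · have : bernoulli k = 0 := by
        rw [bernoulli_eq_bernoulli'_of_ne_one (by omega)]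
        exact bernoulli'_eq_zero_of_odd hodd (by omega)
      simp [this]
      positivity

lemma ad_pow_bound {n : ℕ} (Ω C : Matrix (Fin n) (Fin n) ℂ) (k : ℕ) :
    ‖(fun X : Matrix (Fin n) (Fin n) ℂ => Ω * X - X * Ω)^[k] C‖ ≤ (2 * ‖Ω‖) ^ k * ‖C‖ := by
  induction k with
  | zero => simp
  | succ k ih =>
    rw [Function.iterate_succ_apply']
    set X := (fun X : Matrix (Fin n) (Fin n) ℂ => Ω * X - X * Ω)^[k] C with hX
    calc ‖Ω * X - X * Ω‖ ≤ ‖Ω * X‖ + ‖X * Ω‖ := norm_sub_le _ _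
      _ ≤ ‖Ω‖ * ‖X‖ + ‖X‖ * ‖Ω‖ := add_le_add (norm_mul_le _ _) (norm_mul_le _ _)
      _ = 2 * ‖Ω‖ * ‖X‖ := by ring
      _ ≤ 2 * ‖Ω‖ * ((2 * ‖Ω‖) ^ k * ‖C‖) := by
          have : (0:ℝ) ≤ 2 * ‖Ω‖ := by positivity
          exact mul_le_mul_of_nonneg_left ih this
      _ = (2 * ‖Ω‖) ^ (k + 1) * ‖C‖ := by ring

/-- If `‖Ω‖ < π` (ℓ² operator norm), then the series `∑ (B_k/k!) • ad_Ω^k C` defining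
`d exp_Ω⁻¹ C` is absolutely summable. -/
theorem dexpinv_abs_summable {n : ℕ} (Ω : Matrix (Fin n) (Fin n) ℂ) (hΩ : ‖Ω‖ < Real.pi)
    (C : Matrix (Fin n) (Fin n) ℂ) :
    Summable (fun k : ℕ => ‖(((bernoulli k : ℚ) : ℝ) / (Nat.factorial k)) •
      (fun X : Matrix (Fin n) (Fin n) ℂ => Ω * X - X * Ω)^[k] C‖) := by
  have hπ := Real.pi_pos
  set r : ℝ := ‖Ω‖ / Real.pi with hr
  have hr0 : 0 ≤ r := by positivity
  have hr1 : r < 1 := (div_lt_one hπ).mpr hΩ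
  refine Summable.of_nonneg_of_le (fun k => norm_nonneg _)
    (fun k => ?_) ((summable_geometric_of_lt_one hr0 hr1).mul_left (4 * ‖C‖))
  rw [norm_smul]
  calc ‖(((bernoulli k : ℚ) : ℝ) / (Nat.factorial k))‖ *
        ‖(fun X : Matrix (Fin n) (Fin n) ℂ => Ω * X - X * Ω)^[k] C‖
      ≤ (4 / (2 * Real.pi) ^ k) * ((2 * ‖Ω‖) ^ k * ‖C‖) := by
        refine mul_le_mul ?_ (ad_pow_bound Ω C k) (norm_nonneg _) (by positivity)
        rw [Real.norm_eq_abs, abs_div, Nat.abs_cast]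
        exact bernoulli_div_factorial_le k
    _ = 4 * ‖C‖ * r ^ k := by
        rw [hr, div_pow, mul_pow, mul_pow]
        field_simp
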